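/- Let σ̄ = (σ₁,…,σ_ℓ) and τ̄ = (τ₁,…,τ_ℓ) be sequences of k-molecules over atom sets I and J respectively, with ℓ < m and |I|, |J| ≥ km, with each colour sufficiently large. If conf(σ̄) = conf(τ̄) and σ₀ is another k-molecule over I, then there exists a k-molecule τ₀ over J with conf(σ₀,σ̄) = conf(τ₀,τ̄). -/
import Mathlib


open scoped Classical

/-- Abstract 2-configurations for `k`-molecules with colours in `κ`. -/
structure Config2 (k : ℕ) (κ : Type) : Type where
  rel : Fin k → Fin k → Bool
  col₁ : Fin k → κ
  col₂ : Fin k → κ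

/-- The configuration of a pair of `k`-molecules. -/
def conf {A κ : Type} [DecidableEq A] {k : ℕ} (col : A → κ) (τ σ : Fin k → A) :
    Config2 k κ :=
  ⟨fun p q => decide (τ p = σ q), col ∘ τ, col ∘ σ⟩

/-- Configuration extension lemma: if two sequences of `k`-molecules over atom sets
`I` and `J` have the same configuration, any further molecule over `I` can be matched
by one over `J`. -/
theorem configuration_extension
    {κ I J : Type} [DecidableEq I] [Fintype I] [DecidableEq J] [Fintype J]
    (k m ℓ : ℕ) (hℓ : ℓ < m)
    (colI : I → κ) (colJ : J → κ)
    (hI : k * m ≤ Fintype.card I) (hJ : k * m ≤ Fintype.card J)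
    (hJcol : ∀ c : κ, k * m ≤ (Finset.univ.filter (fun a : J => colJ a = c)).card)
    (σb : Fin ℓ → Fin k → I) (τb : Fin ℓ → Fin k → J)
    (hσinj : ∀ i, Function.Injective (σb i)) (hτinj : ∀ i, Function.Injective (τb i))
    (hconf : ∀ i j, conf colI (σb i) (σb j) = conf colJ (τb i) (τb j))
    (σ0 : Fin k → I) (hσ0 : Function.Injective σ0) :
    ∃ τ0 : Fin k → J, Function.Injective τ0 ∧
      conf colI σ0 σ0 = conf colJ τ0 τ0 ∧
      (∀ j, conf colI σ0 (σb j) = conf colJ τ0 (τb j)) ∧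
      (∀ j, conf colI (σb j) σ0 = conf colJ (τb j) τ0) := by
  classical
  -- basic consequences of hconf
  have hrel : ∀ i j p q, (σb i p = σb j q) ↔ (τb i p = τb j q) := by
    intro i j p q
    have := congrArg (fun c => Config2.rel c p q) (hconf i j)
    simpa [conf, decide_eq_decide] using this
  have hcol : ∀ i p, colJ (τb i p) = colI (σb i p) := by
    intro i p
    have := congrArg (fun c => Config2.col₁ c p) (hconf i i)
    simpa [conf] using this.symm
  -- used atoms
  set Used : Finset J := Finset.univ.biUnion (fun i => Finset.image (τb i) Finset.univ)
    with hUsed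
  have hUsedCard : Used.card ≤ ℓ * k := by
    calc Used.card ≤ ∑ i : Fin ℓ, (Finset.image (τb i) Finset.univ).card :=
          Finset.card_biUnion_le
      _ ≤ ∑ i : Fin ℓ, k := by
          refine Finset.sum_le_sum fun i _ => ?_
          simpa using (Finset.card_image_le.trans (by simp))
      _ = ℓ * k := by simp [mul_comm]
  -- available fresh atoms per position
  set t : Fin k → Finset J := fun p =>
    (Finset.univ.filter (fun a : J => colJ a = colI (σ0 p))) \ Used with ht
  have htcard : ∀ p, k ≤ (t p).card := by
    intro p
    have h1 := hJcol (colI (σ0 p))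
    have h2 : (Finset.univ.filter (fun a : J => colJ a = colI (σ0 p))).card - Used.card
        ≤ (t p).card := Finset.le_card_sdiff Used _
    have hk : k * ℓ + k ≤ k * m := by
      calc k * ℓ + k = k * (ℓ + 1) := by ring
        _ ≤ k * m := Nat.mul_le_mul_left k hℓ
    have hl : ℓ * k = k * ℓ := Nat.mul_comm _ _
    omega
  obtain ⟨f, hfinj, hfmem⟩ :
      ∃ f : Fin k → J, Function.Injective f ∧ ∀ p, f p ∈ t p := by
    rw [← Finset.all_card_le_biUnion_card_iff_exists_injective]
    intro s
    rcases s.eq_empty_or_nonempty with rfl | ⟨p, hp⟩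
    · simp
    · calc s.card ≤ k := by simpa using Finset.card_le_univ s
        _ ≤ (t p).card := htcard p
        _ ≤ (s.biUnion t).card :=
          Finset.card_le_card (Finset.subset_biUnion_of_mem t hp)
  have hfnotused : ∀ p, f p ∉ Used := fun p => (Finset.mem_sdiff.mp (hfmem p)).2
  have hfcol : ∀ p, colJ (f p) = colI (σ0 p) := fun p => by
    have := (Finset.mem_sdiff.mp (hfmem p)).1
    simpa using this
  -- definition of τ0
  set old : Fin k → Prop := fun p => ∃ i q, σ0 p = σb i q with hold
  set τ0 : Fin k → J := fun p =>
    if h : old p then τb h.choose h.choose_spec.choose else f p with hτ0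
  -- key fact: τ0 p = τb j r ↔ σ0 p = σb j r
  have key : ∀ p j r, τ0 p = τb j r ↔ σ0 p = σb j r := by
    intro p j r
    by_cases h : old p
    · have hspec : σ0 p = σb h.choose h.choose_spec.choose := h.choose_spec.choose_spec
      simp only [hτ0, dif_pos h]
      rw [← hrel, ← hspec]
    · simp only [hτ0, dif_neg h]
      constructor
      · intro hf
        exact ((hf ▸ hfnotused p) (by simp [hUsed])).elim
      · intro hs; exact absurd ⟨j, r, hs⟩ h
  have keycol : ∀ p, colJ (τ0 p) = colI (σ0 p) := by
    intro p
    by_cases h : old p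
    · have hspec : σ0 p = σb h.choose h.choose_spec.choose := h.choose_spec.choose_spec
      simp only [hτ0, dif_pos h]
      rw [hcol, ← hspec]
    · simp only [hτ0, dif_neg h]; exact hfcol p
  have keyeq : ∀ p p', τ0 p = τ0 p' ↔ σ0 p = σ0 p' := by
    intro p p'
    by_cases h' : old p'
    · have hspec : σ0 p' = σb h'.choose h'.choose_spec.choose := h'.choose_spec.choose_spec
      have h2 : τ0 p' = τb h'.choose h'.choose_spec.choose := by
        simp only [hτ0, dif_pos h']
      rw [h2, key, ← hspec]
    · by_cases h : old p
      · have hspec : σ0 p = σb h.choose h.choose_spec.choose := h.choose_spec.choose_spec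
        constructor
        · intro he
          have : τ0 p' = τb h.choose h.choose_spec.choose := by
            rw [← he]; simp [hτ0, dif_pos h]
          rw [key] at this
          rw [hspec]; exact this.symm
        · intro he
          exact absurd ⟨h.choose, h.choose_spec.choose, he ▸ hspec⟩ h'
      · simp only [hτ0, dif_neg h, dif_neg h']
        constructor
        · intro he; rw [hfinj he]
        · intro he; rw [hσ0 he]
  refine ⟨τ0, fun p p' h => hσ0 ((keyeq p p').mp h), ?_, ?_, ?_⟩
  · simp only [conf, Config2.mk.injEq]
    refine ⟨?_, ?_, ?_⟩ <;> funext p <;> try funext q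
    · simp [decide_eq_decide, keyeq]
    · simp [Function.comp, keycol p]
    · simp [Function.comp, keycol p]
  · intro j
    simp only [conf, Config2.mk.injEq]
    refine ⟨?_, ?_, ?_⟩ <;> funext p <;> try funext q
    · simp [decide_eq_decide, key]
    · simp [Function.comp, keycol p]
    · simp [Function.comp, hcol]
  · intro j
    simp only [conf, Config2.mk.injEq]
    refine ⟨?_, ?_, ?_⟩ <;> funext p <;> try funext q
    · simp only [decide_eq_decide]
      exact eq_comm.trans ((key q j p).symm.trans eq_comm)
    · simp [Function.comp, hcol]
    · simp [Function.comp, keycol p]
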